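/- Fix ℓ > 0 and define, for r > ℓ: a(r) = (1/2)√((r+3ℓ)(r−ℓ)), b(r) = −ℓ√((r+3ℓ)(r−ℓ))/(r+ℓ), c(r) = √((r²−ℓ²)/2), and h(r) = (r+ℓ)/√((r+3ℓ)(r−ℓ)). Then a, b, c, h satisfy the first-order system (15) in h-form on the interval (ℓ, ∞). (These are the metric functions of the Spin(7) metric (35) on the manifold 𝔸₈ of topology ℝ⁸.) -/

import Mathlib

/-- The metric functions of the new Spin(7) metric (35) on the manifold `𝔸₈`
(topologically `ℝ⁸`): for `ℓ > 0` and `r > ℓ`,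
`a = (1/2)√((r+3ℓ)(r-ℓ))`, `b = -ℓ√((r+3ℓ)(r-ℓ))/(r+ℓ)`,
`c = √((r²-ℓ²)/2)`, `h = (r+ℓ)/√((r+3ℓ)(r-ℓ))`
satisfy the first-order system (15) in `h`-form:
`(1/h) a' = 1 - b/(2a) - a²/c²`, `(1/h) b' = b²/(2a²) - b²/c²`,
`(1/h) c' = a/c + b/(2c)`. -/
theorem A8_solves_firstOrderSystem
    (ℓ : ℝ) (hℓ : 0 < ℓ)
    (a b c h : ℝ → ℝ)
    (hadef : a = fun r => (1 / 2) * Real.sqrt ((r + 3 * ℓ) * (r - ℓ)))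
    (hbdef : b = fun r => -ℓ * Real.sqrt ((r + 3 * ℓ) * (r - ℓ)) / (r + ℓ))
    (hcdef : c = fun r => Real.sqrt ((r ^ 2 - ℓ ^ 2) / 2))
    (hhdef : h = fun r => (r + ℓ) / Real.sqrt ((r + 3 * ℓ) * (r - ℓ))) :
    ∀ r ∈ Set.Ioi ℓ,
      (1 / h r) * deriv a r = 1 - b r / (2 * a r) - (a r) ^ 2 / (c r) ^ 2 ∧
      (1 / h r) * deriv b r = (b r) ^ 2 / (2 * (a r) ^ 2) - (b r) ^ 2 / (c r) ^ 2 ∧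
      (1 / h r) * deriv c r = a r / c r + b r / (2 * c r) := by
  intro r hr
  simp only [Set.mem_Ioi] at hr
  have hrl : 0 < r - ℓ := by linarith
  have hr3l : 0 < r + 3 * ℓ := by linarith
  have hrpl : 0 < r + ℓ := by linarith
  have hP : 0 < (r + 3 * ℓ) * (r - ℓ) := mul_pos hr3l hrl
  have hQ : 0 < (r ^ 2 - ℓ ^ 2) / 2 := by nlinarith
  set s := Real.sqrt ((r + 3 * ℓ) * (r - ℓ)) with hs
  set t := Real.sqrt ((r ^ 2 - ℓ ^ 2) / 2) with ht
  have hspos : 0 < s := Real.sqrt_pos.mpr hP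
  have htpos : 0 < t := Real.sqrt_pos.mpr hQ
  have hs2 : s ^ 2 = (r + 3 * ℓ) * (r - ℓ) := Real.sq_sqrt hP.le
  have ht2 : t ^ 2 = (r ^ 2 - ℓ ^ 2) / 2 := Real.sq_sqrt hQ.le
  -- derivative of the inner polynomial
  have hPdiff : HasDerivAt (fun x : ℝ => (x + 3 * ℓ) * (x - ℓ)) (2 * r + 2 * ℓ) r := by
    have h1 : HasDerivAt (fun x : ℝ => x + 3 * ℓ) 1 r := (hasDerivAt_id r).add_const _
    have h2 : HasDerivAt (fun x : ℝ => x - ℓ) 1 r := (hasDerivAt_id r).sub_const _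
    have := h1.mul h2
    exact this.congr_deriv (by ring)
  have hsdiff : HasDerivAt (fun x : ℝ => Real.sqrt ((x + 3 * ℓ) * (x - ℓ)))
      ((2 * r + 2 * ℓ) / (2 * s)) r := hPdiff.sqrt hP.ne'
  -- a
  have hadiff : HasDerivAt a ((1 / 2) * ((2 * r + 2 * ℓ) / (2 * s))) r := by
    rw [hadef]; exact hsdiff.const_mul _
  -- b
  have hbdiff : HasDerivAt b
      ((-ℓ * ((2 * r + 2 * ℓ) / (2 * s)) * (r + ℓ) - -ℓ * s * 1) / (r + ℓ) ^ 2) r := by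
    rw [hbdef]
    exact HasDerivAt.div (hsdiff.const_mul (-ℓ)) ((hasDerivAt_id r).add_const _) hrpl.ne'
  -- c
  have hQdiff : HasDerivAt (fun x : ℝ => (x ^ 2 - ℓ ^ 2) / 2) r r := by
    have := ((hasDerivAt_pow 2 r).sub_const (ℓ ^ 2)).div_const 2
    exact this.congr_deriv (by norm_num)
  have hcdiff : HasDerivAt c (r / (2 * t)) r := by
    rw [hcdef]; exact hQdiff.sqrt hQ.ne'
  have hda := hadiff.deriv
  have hdb := hbdiff.deriv
  have hdc := hcdiff.deriv
  rw [hda, hdb, hdc, hadef, hbdef, hcdef, hhdef]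
  simp only
  rw [← hs, ← ht]
  clear_value s t
  clear hadef hbdef hcdef hhdef hsdiff hadiff hbdiff hcdiff hda hdb hdc hs ht
  have hs0 : s ≠ 0 := hspos.ne'
  have ht0 : t ≠ 0 := htpos.ne'
  have hrpl0 : (r + ℓ) ≠ 0 := hrpl.ne'
  refine ⟨?_, ?_, ?_⟩
  · field_simp
    linear_combination (r + ℓ) * hs2 - (2 * r + 6 * ℓ) * ht2
  · field_simp
    linear_combination (t ^ 2 + ℓ * (r + ℓ)) * hs2 - (2 * ℓ * (r + 3 * ℓ)) * ht2
  · field_simp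
    ring
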